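/- Let (c₁,B₁),…,(cₘ,Bₘ) be a Brascamp–Lieb datum on ℝⁿ with Σᵢ cᵢ nᵢ = n and ⋂ᵢ ker(Bᵢ) = {0}, and let C ≥ 0. Then the following are equivalent: (i) for every collection of positive definite matrices A₁,…,Aₘ on ℝ^{n₁},…,ℝ^{nₘ}, ∏ᵢ det(Aᵢ)^{cᵢ} ≤ C² det(Σᵢ cᵢ Bᵢ* Aᵢ Bᵢ); (ii) for every positive definite n×n matrix A, det(A) ≤ C² ∏ᵢ det(Bᵢ A Bᵢ*)^{cᵢ}. -/

import Mathlib

open Matrix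


lemma BL.trace_eq_sum_eigenvalues {N : Type*} [Fintype N] [DecidableEq N]
    {A : Matrix N N ℝ} (hA : A.IsHermitian) :
    A.trace = ∑ i, hA.eigenvalues i := by
  conv_lhs => rw [hA.spectral_theorem]
  rw [Unitary.conjStarAlgAut_apply, trace_mul_comm, ← Matrix.mul_assoc,
    (Matrix.mem_unitaryGroup_iff').mp hA.eigenvectorUnitary.2, one_mul, trace_diagonal]
  simp

lemma BL.log_det_le_trace {N : Type*} [Fintype N] [DecidableEq N]
    {A : Matrix N N ℝ} (hA : A.PosDef) :
    Real.log A.det ≤ A.trace - Fintype.card N := by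
  rw [hA.isHermitian.det_eq_prod_eigenvalues, BL.trace_eq_sum_eigenvalues hA.isHermitian]
  simp only [RCLike.ofReal_real_eq_id, id_eq]
  have h1 : Real.log (∏ i, (hA.isHermitian.eigenvalues i : ℝ)) =
      ∑ i, Real.log (hA.isHermitian.eigenvalues i) := by
    rw [Real.log_prod]
    exact fun i _ => (hA.eigenvalues_pos i).ne'
  rw [h1]
  have h2 : ∀ i ∈ Finset.univ, Real.log (hA.isHermitian.eigenvalues i) ≤
      hA.isHermitian.eigenvalues i - 1 :=
    fun i _ => Real.log_le_sub_one_of_pos (hA.eigenvalues_pos i)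
  calc ∑ i, Real.log (hA.isHermitian.eigenvalues i)
      ≤ ∑ i, (hA.isHermitian.eigenvalues i - 1) := Finset.sum_le_sum h2
    _ = (∑ i, hA.isHermitian.eigenvalues i) - Fintype.card N := by
        rw [Finset.sum_sub_distrib]; simp [Finset.card_univ]

open scoped MatrixOrder in
lemma BL.log_det_add_log_det_le_trace {N : Type*} [Fintype N] [DecidableEq N]
    {P Q : Matrix N N ℝ} (hP : P.PosDef) (hQ : Q.PosDef) :
    Real.log P.det + Real.log Q.det + Fintype.card N ≤ (P * Q).trace := by
  set S := CFC.sqrt P with hSdef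
  have hS : S.PosSemidef := (CFC.sqrt_nonneg P).posSemidef
  have hSS : S * S = P := CFC.sqrt_mul_sqrt_self P hP.posSemidef.nonneg
  have hdetS2 : S.det * S.det = P.det := by rw [← det_mul, hSS]
  have hdetS : S.det ≠ 0 := by
    intro h; rw [h, mul_zero] at hdetS2; exact hP.det_pos.ne (by linarith)
  have hSunit : IsUnit S := (isUnit_iff_isUnit_det _).2 hdetS.isUnit
  have hSinj : Function.Injective S.mulVec := mulVec_injective_iff_isUnit.mpr hSunit
  have hSsymm : Sᵀ = S := by
    rw [← conjTranspose_eq_transpose_of_trivial]; exact hS.1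
  have hX : (S * Q * S).PosDef := by
    refine PosDef.of_dotProduct_mulVec_pos ?_ ?_
    · show (S * Q * S)ᴴ = S * Q * S
      rw [conjTranspose_mul, conjTranspose_mul, hS.1.eq, hQ.1.eq, Matrix.mul_assoc]
    · intro x hx
      have hx' : S *ᵥ x ≠ 0 := by
        intro h; exact hx (hSinj (by simpa using h))
      have key : star x ⬝ᵥ (S * Q * S) *ᵥ x
          = star (S *ᵥ x) ⬝ᵥ Q *ᵥ (S *ᵥ x) := by
        simp only [star_trivial]
        calc x ⬝ᵥ (S * Q * S) *ᵥ x
            = x ⬝ᵥ S *ᵥ (Q *ᵥ (S *ᵥ x)) := by rw [← mulVec_mulVec, ← mulVec_mulVec]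
          _ = (x ᵥ* S) ⬝ᵥ (Q *ᵥ (S *ᵥ x)) := dotProduct_mulVec _ _ _
          _ = (x ᵥ* Sᵀ) ⬝ᵥ (Q *ᵥ (S *ᵥ x)) := by rw [hSsymm]
          _ = (S *ᵥ x) ⬝ᵥ Q *ᵥ (S *ᵥ x) := by rw [vecMul_transpose]
      rw [key]; exact hQ.dotProduct_mulVec_pos hx'
  have hdetX : (S * Q * S).det = P.det * Q.det := by
    rw [det_mul, det_mul, mul_right_comm, hdetS2]
  have htrX : (S * Q * S).trace = (P * Q).trace := by
    rw [trace_mul_comm, ← Matrix.mul_assoc, hSS]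
  have := BL.log_det_le_trace hX
  rw [hdetX, htrX, Real.log_mul hP.det_pos.ne' hQ.det_pos.ne'] at this
  linarith

lemma BL.posDef_mul_mul_transpose {p q : Type*} [Fintype p] [DecidableEq p]
    [Fintype q] [DecidableEq q] {Bm : Matrix p q ℝ} (hBm : Function.Surjective Bm.mulVec)
    {A : Matrix q q ℝ} (hA : A.PosDef) : (Bm * A * Bmᵀ).PosDef := by
  refine PosDef.of_dotProduct_mulVec_pos ?_ ?_
  · show (Bm * A * Bmᵀ)ᴴ = Bm * A * Bmᵀ
    rw [conjTranspose_mul, conjTranspose_mul, hA.1.eq,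
      conjTranspose_eq_transpose_of_trivial, conjTranspose_eq_transpose_of_trivial,
      transpose_transpose, Matrix.mul_assoc]
  · intro x hx
    have hBx : Bmᵀ *ᵥ x ≠ 0 := by
      intro h
      obtain ⟨y, hy⟩ := hBm x
      have hxx : x ⬝ᵥ x = 0 := by
        rw [← hy, dotProduct_comm, dotProduct_mulVec, ← mulVec_transpose, hy, h,
          zero_dotProduct]
      exact hx (dotProduct_self_eq_zero.mp hxx)
    have key : star x ⬝ᵥ (Bm * A * Bmᵀ) *ᵥ x
        = star (Bmᵀ *ᵥ x) ⬝ᵥ A *ᵥ (Bmᵀ *ᵥ x) := by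
      simp only [star_trivial]
      calc x ⬝ᵥ (Bm * A * Bmᵀ) *ᵥ x
          = x ⬝ᵥ Bm *ᵥ (A *ᵥ (Bmᵀ *ᵥ x)) := by rw [← mulVec_mulVec, ← mulVec_mulVec]
        _ = (x ᵥ* Bm) ⬝ᵥ (A *ᵥ (Bmᵀ *ᵥ x)) := dotProduct_mulVec _ _ _
        _ = (Bmᵀ *ᵥ x) ⬝ᵥ A *ᵥ (Bmᵀ *ᵥ x) := by rw [← mulVec_transpose]
    rw [key]; exact hA.dotProduct_mulVec_pos hBx

lemma BL.sum_mulVec {ι p q : Type*} [Fintype ι] [Fintype p] [Fintype q]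
    (f : ι → Matrix p q ℝ) (x : q → ℝ) :
    (∑ i, f i) *ᵥ x = ∑ i, f i *ᵥ x := by
  ext j
  simp only [Matrix.mulVec, dotProduct, Finset.sum_apply, Finset.sum_mul,
    Matrix.sum_apply]
  rw [Finset.sum_comm]

lemma BL.dotProduct_fsum {ι p : Type*} [Fintype ι] [Fintype p]
    (x : p → ℝ) (v : ι → p → ℝ) :
    x ⬝ᵥ (∑ i, v i) = ∑ i, x ⬝ᵥ v i := by
  simp only [dotProduct, Finset.sum_apply, Finset.mul_sum]
  rw [Finset.sum_comm]

lemma BL.sumPosDef {m n : ℕ} {ni : Fin m → ℕ} {c : Fin m → ℝ} (hc : ∀ i, 0 < c i)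
    {B : ∀ i, Matrix (Fin (ni i)) (Fin n) ℝ}
    (hker : ∀ x : Fin n → ℝ, (∀ i, (B i).mulVec x = 0) → x = 0)
    (Ai : ∀ i, Matrix (Fin (ni i)) (Fin (ni i)) ℝ) (hAi : ∀ i, (Ai i).PosDef) :
    (∑ i, c i • ((B i)ᵀ * Ai i * B i)).PosDef := by
  refine PosDef.of_dotProduct_mulVec_pos ?_ ?_
  · show (∑ i, c i • ((B i)ᵀ * Ai i * B i))ᴴ = _
    rw [conjTranspose_sum]
    refine Finset.sum_congr rfl fun i _ => ?_
    have h1 : ((B i)ᵀ * Ai i * B i).IsHermitian := by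
      have := isHermitian_conjTranspose_mul_mul (B i) (hAi i).1
      rwa [conjTranspose_eq_transpose_of_trivial] at this
    rw [conjTranspose_smul, h1.eq, star_trivial]
  · intro x hx
    have hterm : ∀ i, x ⬝ᵥ ((B i)ᵀ * Ai i * B i) *ᵥ x
        = (B i *ᵥ x) ⬝ᵥ Ai i *ᵥ (B i *ᵥ x) := by
      intro i
      calc x ⬝ᵥ ((B i)ᵀ * Ai i * B i) *ᵥ x
          = x ⬝ᵥ (B i)ᵀ *ᵥ (Ai i *ᵥ (B i *ᵥ x)) := by rw [← mulVec_mulVec, ← mulVec_mulVec]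
        _ = (x ᵥ* (B i)ᵀ) ⬝ᵥ (Ai i *ᵥ (B i *ᵥ x)) := dotProduct_mulVec _ _ _
        _ = (B i *ᵥ x) ⬝ᵥ Ai i *ᵥ (B i *ᵥ x) := by rw [vecMul_transpose]
    have hquad : star x ⬝ᵥ (∑ i, c i • ((B i)ᵀ * Ai i * B i)) *ᵥ x
        = ∑ i, c i * ((B i *ᵥ x) ⬝ᵥ Ai i *ᵥ (B i *ᵥ x)) := by
      rw [star_trivial, BL.sum_mulVec, BL.dotProduct_fsum]
      refine Finset.sum_congr rfl fun i _ => ?_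
      rw [smul_mulVec, dotProduct_smul, smul_eq_mul, hterm i]
    rw [hquad]
    have hex : ∃ i, B i *ᵥ x ≠ 0 := by
      by_contra h
      push_neg at h
      exact hx (hker x h)
    obtain ⟨i0, hi0⟩ := hex
    refine Finset.sum_pos' (fun i _ => ?_) ⟨i0, Finset.mem_univ i0, ?_⟩
    · have := (hAi i).posSemidef.dotProduct_mulVec_nonneg (B i *ᵥ x)
      rw [star_trivial] at this
      exact mul_nonneg (hc i).le this
    · have := (hAi i0).dotProduct_mulVec_pos hi0
      rw [star_trivial] at this
      exact mul_pos (hc i0) this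

lemma BL.log_prod_rpow {ι : Type*} [Fintype ι] (c : ι → ℝ) (d : ι → ℝ) (hd : ∀ i, 0 < d i) :
    Real.log (∏ i, d i ^ c i) = ∑ i, c i * Real.log (d i) := by
  rw [Real.log_prod (fun i _ => (Real.rpow_pos_of_pos (hd i) _).ne')]
  exact Finset.sum_congr rfl fun i _ => Real.log_rpow (hd i) _

/-- **Duality between the Gaussian Brascamp–Lieb inequality and its determinantal
dual formulation** (inequalities (9) and (11) of the paper). Under the homogeneity
condition `∑ cᵢ nᵢ = n` and nondegeneracy `⋂ ker Bᵢ = 0`, the inequality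
`∏ det(Aᵢ)^{cᵢ} ≤ C² det(∑ cᵢ Bᵢ* Aᵢ Bᵢ)` for all positive definite `Aᵢ` is
equivalent to `det(A) ≤ C² ∏ det(Bᵢ A Bᵢ*)^{cᵢ}` for all positive definite `A`. -/
theorem gaussian_brascamp_lieb_duality
    (m n : ℕ) (ni : Fin m → ℕ) (c : Fin m → ℝ) (hc : ∀ i, 0 < c i)
    (B : ∀ i, Matrix (Fin (ni i)) (Fin n) ℝ)
    (hB : ∀ i, Function.Surjective (B i).mulVec)
    (hdim : ∑ i, c i * (ni i : ℝ) = (n : ℝ))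
    (hker : ∀ x : Fin n → ℝ, (∀ i, (B i).mulVec x = 0) → x = 0)
    (C : ℝ) (hC : 0 ≤ C) :
    (∀ Ai : ∀ i, Matrix (Fin (ni i)) (Fin (ni i)) ℝ, (∀ i, (Ai i).PosDef) →
      ∏ i, (Ai i).det ^ (c i) ≤ C ^ 2 * (∑ i, c i • ((B i)ᵀ * Ai i * B i)).det) ↔
    (∀ A : Matrix (Fin n) (Fin n) ℝ, A.PosDef →
      A.det ≤ C ^ 2 * ∏ i, ((B i * A * (B i)ᵀ).det) ^ (c i)) := by
  rcases eq_or_lt_of_le hC with hC0 | hCpos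
  · -- C = 0 : both sides are false
    constructor
    · intro h1 A hA
      exfalso
      have h := h1 (fun _ => 1) (fun _ => Matrix.PosDef.one)
      rw [← hC0] at h
      norm_num [Matrix.det_one, Real.one_rpow] at h
    · intro h2 Ai hAi
      exfalso
      have h := h2 1 Matrix.PosDef.one
      rw [← hC0] at h
      norm_num [Matrix.det_one] at h
  · have hC2 : (0:ℝ) < C ^ 2 := by positivity
    constructor
    · -- (i) → (ii)
      intro h1 A hA
      have hKi : ∀ i, (B i * A * (B i)ᵀ).PosDef :=
        fun i => BL.posDef_mul_mul_transpose (hB i) hA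
      have hAiInv : ∀ i, ((B i * A * (B i)ᵀ)⁻¹).PosDef := fun i => (hKi i).inv
      have hMpd := BL.sumPosDef hc hker (fun i => (B i * A * (B i)ᵀ)⁻¹) hAiInv
      set M := ∑ i, c i • ((B i)ᵀ * (B i * A * (B i)ᵀ)⁻¹ * B i) with hMdef
      have h1' := h1 _ hAiInv
      -- trace (A * M) = n
      have htr : (A * M).trace = (n : ℝ) := by
        rw [hMdef, Matrix.mul_sum, trace_sum]
        have hterm : ∀ i,
            (A * (c i • ((B i)ᵀ * (B i * A * (B i)ᵀ)⁻¹ * B i))).trace = c i * (ni i : ℝ) := by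
          intro i
          rw [mul_smul_comm, trace_smul, smul_eq_mul]
          congr 1
          rw [show A * ((B i)ᵀ * (B i * A * (B i)ᵀ)⁻¹ * B i)
              = (A * ((B i)ᵀ * (B i * A * (B i)ᵀ)⁻¹)) * B i from by
                simp only [Matrix.mul_assoc],
            trace_mul_comm,
            show B i * (A * ((B i)ᵀ * (B i * A * (B i)ᵀ)⁻¹))
              = (B i * A * (B i)ᵀ) * (B i * A * (B i)ᵀ)⁻¹ from by
                simp only [Matrix.mul_assoc],
            Matrix.mul_nonsing_inv _ (hKi i).det_pos.ne'.isUnit, trace_one]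
          simp
        rw [Finset.sum_congr rfl (fun i _ => hterm i), hdim]
      -- log A.det ≤ - log M.det
      have hlogA : Real.log A.det + Real.log M.det + (n : ℝ) ≤ (n : ℝ) := by
        have h3 := BL.log_det_add_log_det_le_trace hA hMpd
        rw [htr] at h3
        simpa [Fintype.card_fin] using h3
      -- logs of h1'
      have hdKinv : ∀ i, (0:ℝ) < ((B i * A * (B i)ᵀ)⁻¹).det := fun i => (hAiInv i).det_pos
      have hprodpos : (0:ℝ) < ∏ i, ((B i * A * (B i)ᵀ)⁻¹).det ^ c i :=
        Finset.prod_pos fun i _ => Real.rpow_pos_of_pos (hdKinv i) _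
      have hlog1 : Real.log (∏ i, ((B i * A * (B i)ᵀ)⁻¹).det ^ c i)
          ≤ Real.log (C ^ 2 * M.det) :=
        (Real.log_le_log_iff hprodpos (mul_pos hC2 hMpd.det_pos)).mpr h1'
      rw [BL.log_prod_rpow _ _ hdKinv,
        Real.log_mul hC2.ne' hMpd.det_pos.ne'] at hlog1
      have hsum_eq : ∑ i, c i * Real.log (((B i * A * (B i)ᵀ)⁻¹).det)
          = - ∑ i, c i * Real.log ((B i * A * (B i)ᵀ).det) := by
        rw [← Finset.sum_neg_distrib]
        refine Finset.sum_congr rfl fun i _ => ?_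
        rw [Matrix.det_nonsing_inv, Ring.inverse_eq_inv', Real.log_inv]
        ring
      rw [hsum_eq] at hlog1
      -- conclude
      have hrhs : (0:ℝ) < C ^ 2 * ∏ i, (B i * A * (B i)ᵀ).det ^ c i :=
        mul_pos hC2 (Finset.prod_pos fun i _ => Real.rpow_pos_of_pos (hKi i).det_pos _)
      rw [← Real.log_le_log_iff hA.det_pos hrhs,
        Real.log_mul hC2.ne'
          (Finset.prod_pos fun i _ => Real.rpow_pos_of_pos (hKi i).det_pos _).ne',
        BL.log_prod_rpow _ _ (fun i => (hKi i).det_pos)]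
      linarith
    · -- (ii) → (i)
      intro h2 Ai hAi
      have hMpd := BL.sumPosDef hc hker Ai hAi
      set M := ∑ i, c i • ((B i)ᵀ * Ai i * B i) with hMdef
      have hMinv : M⁻¹.PosDef := hMpd.inv
      have hKi : ∀ i, (B i * M⁻¹ * (B i)ᵀ).PosDef :=
        fun i => BL.posDef_mul_mul_transpose (hB i) hMinv
      have h2' := h2 M⁻¹ hMinv
      -- per-index trace inequality
      have hI : ∀ i, Real.log (Ai i).det + Real.log ((B i * M⁻¹ * (B i)ᵀ).det) + (ni i : ℝ)
          ≤ (Ai i * (B i * M⁻¹ * (B i)ᵀ)).trace := by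
        intro i
        have := BL.log_det_add_log_det_le_trace (hAi i) (hKi i)
        simpa [Fintype.card_fin] using this
      -- weighted sum of traces equals n
      have htr : ∑ i, c i * (Ai i * (B i * M⁻¹ * (B i)ᵀ)).trace = (n : ℝ) := by
        have hterm : ∀ i, c i * (Ai i * (B i * M⁻¹ * (B i)ᵀ)).trace
            = ((c i • ((B i)ᵀ * Ai i * B i)) * M⁻¹).trace := by
          intro i
          rw [smul_mul_assoc, trace_smul, smul_eq_mul]
          congr 1
          rw [show Ai i * (B i * M⁻¹ * (B i)ᵀ)
              = (Ai i * (B i * M⁻¹)) * (B i)ᵀ from by simp only [Matrix.mul_assoc],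
            trace_mul_comm,
            show (B i)ᵀ * (Ai i * (B i * M⁻¹))
              = ((B i)ᵀ * Ai i * B i) * M⁻¹ from by simp only [Matrix.mul_assoc]]
        rw [Finset.sum_congr rfl (fun i _ => hterm i), ← trace_sum, ← Matrix.sum_mul,
          ← hMdef, Matrix.mul_nonsing_inv _ hMpd.det_pos.ne'.isUnit, trace_one]
        simp
      -- weighted sum of the per-index inequalities
      have hwsum : ∑ i, c i * Real.log (Ai i).det
          + ∑ i, c i * Real.log ((B i * M⁻¹ * (B i)ᵀ).det) + (n : ℝ) ≤ (n : ℝ) := by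
        have h4 : ∑ i, c i * (Real.log (Ai i).det
              + Real.log ((B i * M⁻¹ * (B i)ᵀ).det) + (ni i : ℝ))
            ≤ ∑ i, c i * (Ai i * (B i * M⁻¹ * (B i)ᵀ)).trace :=
          Finset.sum_le_sum fun i _ => mul_le_mul_of_nonneg_left (hI i) (hc i).le
        rw [htr] at h4
        have hexp : ∑ i, c i * (Real.log (Ai i).det
              + Real.log ((B i * M⁻¹ * (B i)ᵀ).det) + (ni i : ℝ))
            = ∑ i, c i * Real.log (Ai i).det
              + ∑ i, c i * Real.log ((B i * M⁻¹ * (B i)ᵀ).det)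
              + ∑ i, c i * (ni i : ℝ) := by
          simp only [mul_add]
          rw [Finset.sum_add_distrib, Finset.sum_add_distrib]
        rw [hexp, hdim] at h4
        exact h4
      -- logs of h2'
      have hprodK : (0:ℝ) < ∏ i, (B i * M⁻¹ * (B i)ᵀ).det ^ c i :=
        Finset.prod_pos fun i _ => Real.rpow_pos_of_pos (hKi i).det_pos _
      have hlog2 : Real.log (M⁻¹.det) ≤ Real.log (C ^ 2 * ∏ i, (B i * M⁻¹ * (B i)ᵀ).det ^ c i) :=
        (Real.log_le_log_iff hMinv.det_pos (mul_pos hC2 hprodK)).mpr h2'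
      rw [Real.log_mul hC2.ne' hprodK.ne',
        BL.log_prod_rpow _ _ (fun i => (hKi i).det_pos),
        Matrix.det_nonsing_inv, Ring.inverse_eq_inv', Real.log_inv] at hlog2
      -- conclude
      have hprodA : (0:ℝ) < ∏ i, (Ai i).det ^ c i :=
        Finset.prod_pos fun i _ => Real.rpow_pos_of_pos (hAi i).det_pos _
      rw [← Real.log_le_log_iff hprodA (mul_pos hC2 hMpd.det_pos),
        Real.log_mul hC2.ne' hMpd.det_pos.ne',
        BL.log_prod_rpow _ _ (fun i => (hAi i).det_pos)]
      linarith
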